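/- Let L > 0, let E be a real inner product space (for instance ℝⁿ), and let f : ℝ → E be a continuously differentiable function which is L-periodic. Then for every x ∈ ℝ, ‖f(x)‖² ≤ (1/L + 2)·∫₀^L ‖f(u)‖² du + 2·∫₀^L ‖f'(u)‖² du. -/

import Mathlib

open intervalIntegral Set

theorem sup_sq_le_interpolation
    {E : Type*} [NormedAddCommGroup E] [InnerProductSpace ℝ E]
    (L : ℝ) (hL : 0 < L) (f : ℝ → E) (hf : ContDiff ℝ 1 f)
    (hper : Function.Periodic f L) (x : ℝ) :
    ‖f x‖ ^ 2 ≤ (1 / L + 2) * (∫ u in (0:ℝ)..L, ‖f u‖ ^ 2)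
      + 2 * ∫ u in (0:ℝ)..L, ‖deriv f u‖ ^ 2 := by
  have hfc : Continuous f := hf.continuous
  have hdiff : Differentiable ℝ f := hf.differentiable one_ne_zero
  have hf'c : Continuous (deriv f) := hf.continuous_deriv le_rfl
  -- deriv f is periodic
  have hper' : Function.Periodic (deriv f) L := by
    intro t
    have h1 : (fun s => f (s + L)) = f := funext hper
    have h2 : deriv (fun s => f (s + L)) t = deriv f (t + L) := by
      simpa using deriv_comp_add_const f L t
    rw [h1] at h2
    exact h2.symm
  set g : ℝ → ℝ := fun u => ‖f u‖ ^ 2 with hgdef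
  have hgc : Continuous g := by continuity
  have hgper : Function.Periodic g L := fun t => by simp only [g, hper t]
  set g' : ℝ → ℝ := fun u => 2 * (inner ℝ (deriv f u) (f u) : ℝ) with hg'def
  have hd : ∀ u : ℝ, HasDerivAt g (g' u) u := by
    intro u
    have h1 : HasDerivAt f (deriv f u) u := (hdiff u).hasDerivAt
    have h2 := h1.inner ℝ h1
    have h3 : (fun t => (inner ℝ (f t) (f t) : ℝ)) = g := by
      funext t; simp [g, real_inner_self_eq_norm_sq]
    rw [h3] at h2
    refine h2.congr_deriv ?_
    simp [g', real_inner_comm]; ring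
  have hg'c : Continuous g' := by
    apply Continuous.mul continuous_const
    exact hf'c.inner hfc
  have hg'per : Function.Periodic g' L := fun t => by
    simp only [g', hper t, hper' t]
  -- pick minimum point y
  obtain ⟨y, hy, hymin⟩ := (isCompact_Icc (a := (0:ℝ)) (b := L)).exists_isMinOn
    (nonempty_Icc.2 hL.le) hgc.continuousOn
  -- translate x to [y, y+L)
  set n : ℤ := ⌊(x - y) / L⌋ with hn
  set x₁ : ℝ := x - n * L with hx₁
  have hfx : f x₁ = f x := hper.sub_int_mul_eq n
  have hx₁mem : y ≤ x₁ ∧ x₁ ≤ y + L := by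
    have h1 : (n : ℝ) ≤ (x - y) / L := Int.floor_le _
    have h2 : (x - y) / L < n + 1 := Int.lt_floor_add_one _
    have h1' : (n : ℝ) * L ≤ x - y := by
      rw [← le_div_iff₀ hL]; exact h1
    have h2' : x - y < ((n : ℝ) + 1) * L := by
      rw [← div_lt_iff₀ hL]; exact_mod_cast h2
    constructor <;> [skip; skip] <;> simp only [x₁] <;> nlinarith
  -- integrability
  have hint_g : ∀ a b : ℝ, IntervalIntegrable g MeasureTheory.volume a b :=
    fun a b => hgc.intervalIntegrable a b
  have hint_g' : ∀ a b : ℝ, IntervalIntegrable g' MeasureTheory.volume a b :=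
    fun a b => hg'c.intervalIntegrable a b
  have hint_ag' : ∀ a b : ℝ, IntervalIntegrable (fun u => |g' u|) MeasureTheory.volume a b :=
    fun a b => (hg'c.abs).intervalIntegrable a b
  -- FTC
  have hftc : ∫ u in y..x₁, g' u = g x₁ - g y :=
    integral_eq_sub_of_hasDerivAt (fun t _ => hd t) (hint_g' y x₁)
  -- bound the integral of g'
  have hb1 : ∫ u in y..x₁, g' u ≤ ∫ u in y..x₁, |g' u| :=
    integral_mono hx₁mem.1 (hint_g' y x₁) (hint_ag' y x₁) (fun u => le_abs_self _)
  have hb2 : ∫ u in y..x₁, |g' u| ≤ ∫ u in y..(y + L), |g' u| := by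
    apply integral_mono_interval le_rfl hx₁mem.1 hx₁mem.2
    · filter_upwards with u using abs_nonneg _
    · exact hint_ag' y (y + L)
  have hb3 : ∫ u in y..(y + L), |g' u| = ∫ u in (0:ℝ)..L, |g' u| := by
    have hap : Function.Periodic (fun u => |g' u|) L := fun t => by simp [hg'per t]
    have := hap.intervalIntegral_add_eq y 0
    simpa using this
  have hb4 : ∫ u in (0:ℝ)..L, |g' u|
      ≤ ∫ u in (0:ℝ)..L, (‖f u‖ ^ 2 + ‖deriv f u‖ ^ 2) := by
    apply integral_mono_on hL.le (hint_ag' 0 L)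
    · exact ((hfc.norm.pow 2).add (hf'c.norm.pow 2)).intervalIntegrable 0 L
    · intro u _
      have h1 : |(inner ℝ (deriv f u) (f u) : ℝ)| ≤ ‖deriv f u‖ * ‖f u‖ :=
        abs_real_inner_le_norm _ _
      have h2 : 2 * (‖deriv f u‖ * ‖f u‖) ≤ ‖deriv f u‖ ^ 2 + ‖f u‖ ^ 2 := by
        nlinarith [sq_nonneg (‖deriv f u‖ - ‖f u‖)]
      calc |g' u| = 2 * |(inner ℝ (deriv f u) (f u) : ℝ)| := by
            simp [g', abs_mul]
        _ ≤ 2 * (‖deriv f u‖ * ‖f u‖) := by linarith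
        _ ≤ ‖f u‖ ^ 2 + ‖deriv f u‖ ^ 2 := by linarith
  have hsplit : ∫ u in (0:ℝ)..L, (‖f u‖ ^ 2 + ‖deriv f u‖ ^ 2)
      = (∫ u in (0:ℝ)..L, ‖f u‖ ^ 2) + ∫ u in (0:ℝ)..L, ‖deriv f u‖ ^ 2 :=
    integral_add ((hfc.norm.pow 2).intervalIntegrable 0 L)
      ((hf'c.norm.pow 2).intervalIntegrable 0 L)
  -- bound g y
  have hgy : L * g y ≤ ∫ u in (0:ℝ)..L, g u := by
    have : ∫ u in (0:ℝ)..L, g y ≤ ∫ u in (0:ℝ)..L, g u :=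
      integral_mono_on hL.le (intervalIntegrable_const) (hint_g 0 L)
        (fun u hu => hymin hu)
    simpa [smul_eq_mul] using this
  -- nonnegativity of the integrals
  have hI1 : 0 ≤ ∫ u in (0:ℝ)..L, ‖f u‖ ^ 2 :=
    integral_nonneg hL.le (fun u _ => sq_nonneg _)
  have hI2 : 0 ≤ ∫ u in (0:ℝ)..L, ‖deriv f u‖ ^ 2 :=
    integral_nonneg hL.le (fun u _ => sq_nonneg _)
  -- combine
  have key : g x₁ ≤ g y + ((∫ u in (0:ℝ)..L, ‖f u‖ ^ 2)
      + ∫ u in (0:ℝ)..L, ‖deriv f u‖ ^ 2) := by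
    have := hftc
    nlinarith [hb1, hb2, hb3, hb4, hsplit]
  have hgx : g x = g x₁ := by simp [g, hfx]
  have hIg : (∫ u in (0:ℝ)..L, g u) = ∫ u in (0:ℝ)..L, ‖f u‖ ^ 2 := rfl
  rw [hIg] at hgy
  have hgy' : g y ≤ (1 / L) * ∫ u in (0:ℝ)..L, ‖f u‖ ^ 2 := by
    rw [div_mul_eq_mul_div, one_mul, le_div_iff₀ hL]
    linarith [hgy]
  show g x ≤ _
  rw [hgx]
  nlinarith [key, hgy', hI1, hI2]
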